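/- Let A be a commutative ring, B an A-algebra generated by x₁,...,xₙ, and M a B-module generated by v₁,...,vₘ. Suppose a subfamily (w_J)_{J ∈ J'} of the monomial family (x₁^{i₁}···xₙ^{iₙ} v_ℓ) is: (i) downward closed in exponents (if (ℓ,i) ∉ J' and k ≥ i componentwise then (ℓ,k) ∉ J'), (ii) spanning in the sense that every w_J with J ∈ J is an A-linear combination of {w_{J'} : J' ∈ J', J' ⪯ J} in the lexicographic order, and (iii) A-linearly independent. Then M is finitely presented as a B-module, with relations given by expressing each 'corner' element of the complement of J' in terms of smaller elements. -/

import Mathlib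

/-- Adding a constant (componentwise) preserves strict lexicographic order on `Fin n → ℕ`. -/
lemma lex_add_right_aux {n : ℕ} {i k : Fin n → ℕ} (d : Fin n → ℕ)
    (h : (toLex i : Lex (Fin n → ℕ)) < toLex k) :
    (toLex (i + d) : Lex (Fin n → ℕ)) < toLex (k + d) := by
  obtain ⟨j, hj, hlt⟩ := h
  refine ⟨j, fun j' h' => ?_, ?_⟩
  · have h1 : i j' = k j' := hj j' h'
    show (i + d) j' = (k + d) j'
    simp [h1]
  · show (i + d) j < (k + d) j
    exact Nat.add_lt_add_right hlt (d j)

/-- Dickson's lemma for `Fin n → ℕ`. -/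
lemma pi_nat_isPWO {n : ℕ} (s : Set (Fin n → ℕ)) : s.IsPWO :=
  Set.isPWO_of_wellQuasiOrderedLE s

/-- The lexicographic order on `Fin n → ℕ` is well-founded. -/
lemma wellFoundedLT_lex_pi (n : ℕ) : WellFoundedLT (Lex (Fin n → ℕ)) := by
  constructor
  rw [RelEmbedding.wellFounded_iff_isEmpty]
  constructor
  rintro ⟨f, hf⟩
  obtain ⟨a, b, hab, hle⟩ :=
    Set.PartiallyWellOrderedOn.exists_lt (pi_nat_isPWO (Set.univ : Set (Fin n → ℕ))) (f := fun t => ofLex (f t)) (fun _ => Set.mem_univ _)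
  have h1 : f b < f a := hf.2 hab
  haveI : WellFoundedLT (Fin n) := inferInstance
  have h2 : f a ≤ f b := Pi.toLex_monotone (ι := Fin n) (β := fun _ => ℕ) hle
  exact absurd (h2.trans_lt h1) (lt_irrefl _)

/-- Every point of a set in `Fin n → ℕ` lies above a minimal point of that set. -/
lemma exists_minimal_le {n : ℕ} (S : Set (Fin n → ℕ)) {i : Fin n → ℕ} (hi : i ∈ S) :
    ∃ c ∈ S, c ≤ i ∧ ∀ k ∈ S, ¬ k < c := by
  have hwf : WellFounded ((· < ·) : (Fin n → ℕ) → (Fin n → ℕ) → Prop) :=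
    (Set.isWF_univ_iff.mp (pi_nat_isPWO _).isWF).wf
  obtain ⟨c, ⟨hcS, hci⟩, hmin⟩ := hwf.has_min {k | k ∈ S ∧ k ≤ i} ⟨i, hi, le_rfl⟩
  refine ⟨c, hcS, hci, fun k hk hlt => ?_⟩
  exact hmin k ⟨hk, hlt.le.trans hci⟩ hlt

/-- The set of minimal points of any set in `Fin n → ℕ` is finite (Dickson). -/
lemma finite_minimals {n : ℕ} (S : Set (Fin n → ℕ)) :
    {c ∈ S | ∀ k ∈ S, ¬ k < c}.Finite := by
  apply IsAntichain.finite_of_partiallyWellOrderedOn (r := (· ≤ ·))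
  · rintro a ⟨haS, hamin⟩ b ⟨hbS, hbmin⟩ hne hle
    exact hbmin a haS (lt_of_le_of_ne hle hne)
  · exact pi_nat_isPWO _

theorem finitePresentation_of_good_generating_family (A : Type*) [CommRing A]
    (B : Type*) [CommRing B] [Algebra A B]
    (M : Type*) [AddCommGroup M] [Module A M] [Module B M] [IsScalarTower A B M]
    (n m : ℕ) (x : Fin n → B) (hx : Algebra.adjoin A (Set.range x) = ⊤)
    (v : Fin m → M) (hv : Submodule.span B (Set.range v) = ⊤)
    (J' : Set (Fin m × (Fin n → ℕ)))
    (w : Fin m × (Fin n → ℕ) → M)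
    (hw : ∀ p : Fin m × (Fin n → ℕ), w p = (∏ j, x j ^ p.2 j) • v p.1)
    -- (i) the complement is upward closed in the exponents
    (hdown : ∀ (ℓ : Fin m) (i k : Fin n → ℕ), (ℓ, i) ∉ J' → i ≤ k → (ℓ, k) ∉ J')
    -- (ii) every member of the full family is an A-linear combination of
    -- members of the subfamily of lexicographically smaller or equal index
    (hspan : ∀ p : Fin m × (Fin n → ℕ),
      w p ∈ Submodule.span A (w '' {q ∈ J' |
        (toLex (q.1, toLex q.2) : Fin m ×ₗ Lex (Fin n → ℕ)) ≤ toLex (p.1, toLex p.2)}))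
    -- (iii) the subfamily is A-linearly independent
    (hind : LinearIndependent A (fun q : J' => w q.1)) :
    Module.FinitePresentation B M := by
  classical
  haveI : WellFoundedLT (Fin m) := inferInstance
  haveI : WellFoundedLT (Lex (Fin n → ℕ)) := wellFoundedLT_lex_pi n
  -- notation
  -- the key (lexicographic index) of a point
  set key : Fin m × (Fin n → ℕ) → Fin m ×ₗ Lex (Fin n → ℕ) := fun p => toLex (p.1, toLex p.2) with hkey
  have key_inj : Function.Injective key := by
    intro p q h
    have := toLex.injective h
    exact Prod.ext (congrArg Prod.fst this) (toLex.injective (congrArg Prod.snd this))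
  -- monomials
  set mono : (Fin n → ℕ) → B := fun i => ∏ j, x j ^ i j with hmono
  have mono_add : ∀ i d : Fin n → ℕ, mono (i + d) = mono d * mono i := by
    intro i d
    simp only [hmono, Pi.add_apply, pow_add]
    rw [Finset.prod_mul_distrib, mul_comm]
  -- basis vectors and monomial vectors in the free module F
  set e : Fin m → (Fin m → B) := fun ℓ => Pi.single ℓ (1 : B) with he
  set μ : Fin m × (Fin n → ℕ) → (Fin m → B) := fun p => mono p.2 • e p.1 with hμ
  have shift_μ : ∀ (p : Fin m × (Fin n → ℕ)) (d : Fin n → ℕ), μ (p.1, p.2 + d) = mono d • μ p := by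
    intro p d
    simp only [hμ, mono_add, mul_smul]
  -- the projection
  set π : (Fin m → B) →ₗ[B] M := Fintype.linearCombination B v with hπ
  have hπe : ∀ ℓ, π (e ℓ) = v ℓ := by
    intro ℓ
    rw [hπ, he]
    simp [Fintype.linearCombination_apply, Pi.single_apply, ite_smul]
  have hπμ : ∀ p : Fin m × (Fin n → ℕ), π (μ p) = w p := by
    intro p
    simp only [hμ, map_smul, hπe, hw, hmono]
  have hπsurj : Function.Surjective π := by
    rw [← LinearMap.range_eq_top, hπ, Fintype.range_linearCombination, hv]
  -- choose, for each p, a linear combination expressing w p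
  have hrep : ∀ p : Fin m × (Fin n → ℕ), ∃ l : (Fin m × (Fin n → ℕ)) →₀ A, (↑l.support ⊆ {q ∈ J' | key q ≤ key p}) ∧
      Finsupp.linearCombination A w l = w p := by
    intro p
    obtain ⟨l, hl1, hl2⟩ := (Finsupp.mem_span_image_iff_linearCombination A).mp (hspan p)
    exact ⟨l, (Finsupp.mem_supported A l).mp hl1, hl2⟩
  choose lc hlcsupp hlcsum using hrep
  -- the relation elements
  set r : Fin m × (Fin n → ℕ) → (Fin m → B) := fun p => μ p - Finsupp.linearCombination A μ (lc p) with hr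
  have hπr : ∀ p : Fin m × (Fin n → ℕ), π (r p) = 0 := by
    intro p
    have : (π.restrictScalars A) (Finsupp.linearCombination A μ (lc p)) =
        Finsupp.linearCombination A (fun q => π (μ q)) (lc p) :=
      Finsupp.apply_linearCombination A (π.restrictScalars A) μ (lc p)
    simp only [hr, map_sub]
    rw [show π (Finsupp.linearCombination A μ (lc p)) =
        (π.restrictScalars A) (Finsupp.linearCombination A μ (lc p)) from rfl, this]
    have hfun : (fun q => π (μ q)) = w := funext hπμ
    rw [hfun, hπμ, hlcsum, sub_self]
  -- corners
  set Cset : Set (Fin m × (Fin n → ℕ)) := {c | c ∉ J' ∧ ∀ k : Fin n → ℕ, (c.1, k) ∉ J' → ¬ k < c.2} with hCset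
  have hCfin : Cset.Finite := by
    have : Cset ⊆ ⋃ ℓ : Fin m, (fun i => (ℓ, i)) ''
        {c ∈ {i | (ℓ, i) ∉ J'} | ∀ k ∈ {i | (ℓ, i) ∉ J'}, ¬ k < c} := by
      rintro ⟨ℓ, i⟩ ⟨h1, h2⟩
      exact Set.mem_iUnion.mpr ⟨ℓ, ⟨i, ⟨h1, h2⟩, rfl⟩⟩
    exact Set.Finite.subset
      (Set.finite_iUnion fun ℓ => (finite_minimals _).image _) this
  -- the submodule of relations
  set K : Submodule B (Fin m → B) := Submodule.span B (r '' Cset) with hK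
  have hKker : K ≤ LinearMap.ker π := by
    rw [hK, Submodule.span_le]
    rintro _ ⟨c, _, rfl⟩
    exact LinearMap.mem_ker.mpr (hπr c)
  -- target submodules for the rewriting induction
  set N : Fin m × (Fin n → ℕ) → Submodule A (Fin m → B) := fun p =>
    (K.restrictScalars A) ⊔ Submodule.span A (μ '' {q ∈ J' | key q ≤ key p}) with hN
  have hNmono : ∀ p p' : Fin m × (Fin n → ℕ), key p ≤ key p' → N p ≤ N p' := by
    intro p p' h
    apply sup_le_sup_left
    apply Submodule.span_mono
    apply Set.image_mono
    rintro q ⟨hq1, hq2⟩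
    exact ⟨hq1, hq2.trans h⟩
  -- strict monotonicity of key under shifting
  have key_shift : ∀ (q c : Fin m × (Fin n → ℕ)) (d : Fin n → ℕ), key q < key c →
      key (q.1, q.2 + d) < key (c.1, c.2 + d) := by
    intro q c d h
    rw [hkey, Prod.Lex.lt_iff] at h ⊢
    rcases h with h | ⟨h1, h2⟩
    · exact Or.inl h
    · exact Or.inr ⟨h1, lex_add_right_aux d h2⟩
  -- main rewriting lemma
  have main : ∀ p : Fin m × (Fin n → ℕ), μ p ∈ N p := by
    have hwf : WellFounded (fun p q : Fin m × (Fin n → ℕ) => key p < key q) :=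
      InvImage.wf key IsWellFounded.wf
    intro p
    induction p using hwf.induction with
    | _ p IH =>
      by_cases hp : p ∈ J'
      · apply Submodule.mem_sup_right
        exact Submodule.subset_span ⟨p, ⟨hp, le_rfl⟩, rfl⟩
      · -- find a corner below p
        obtain ⟨c2, hc2S, hc2le, hc2min⟩ :=
          exists_minimal_le {i | (p.1, i) ∉ J'} (show p.2 ∈ _ from hp)
        set c : Fin m × (Fin n → ℕ) := (p.1, c2) with hc
        have hcC : c ∈ Cset := ⟨hc2S, fun k hk => hc2min k hk⟩
        set d : Fin n → ℕ := p.2 - c2 with hd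
        have hcd : c2 + d = p.2 := by
          funext j
          exact Nat.add_sub_cancel' (hc2le j)
        have hshiftc : ((c.1 : Fin m), c.2 + d) = p := by
          rw [hc]; exact Prod.ext rfl hcd
        -- μ p = mono d • r c + Σ over lc c
        have hsplit : μ p = mono d • r c +
            Finsupp.linearCombination A (fun q : Fin m × (Fin n → ℕ) => μ (q.1, q.2 + d)) (lc c) := by
          have h1 : μ p = mono d • μ c := by
            rw [← hshiftc]
            exact shift_μ c d
          have h2 : mono d • Finsupp.linearCombination A μ (lc c) =
              Finsupp.linearCombination A (fun q : Fin m × (Fin n → ℕ) => μ (q.1, q.2 + d)) (lc c) := by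
            have := Finsupp.apply_linearCombination A
              (((LinearMap.lsmul B (Fin m → B)) (mono d)).restrictScalars A) μ (lc c)
            simp only [LinearMap.coe_restrictScalars, LinearMap.lsmul_apply] at this
            rw [this]
            have hfun : (⇑((LinearMap.lsmul B (Fin m → B)) (mono d)) ∘ μ) =
                (fun q : Fin m × (Fin n → ℕ) => μ (q.1, q.2 + d)) := by
              funext q
              simp only [Function.comp_apply, LinearMap.lsmul_apply, shift_μ q d]
            rw [hfun]
          rw [h1, hr]
          rw [smul_sub, h2]
          exact (sub_add_cancel _ _).symm
        rw [hsplit]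
        apply Submodule.add_mem
        · apply Submodule.mem_sup_left
          simp only [Submodule.restrictScalars_mem]
          exact Submodule.smul_mem K (mono d) (Submodule.subset_span ⟨c, hcC, rfl⟩)
        · -- each term of the linear combination is in N p by induction
          rw [Finsupp.linearCombination_apply, Finsupp.sum]
          apply Submodule.sum_smul_mem
          intro q hq
          have hqmem := hlcsupp c hq
          obtain ⟨hqJ', hqle⟩ := hqmem
          have hqne : q ≠ c := fun h => hcC.1 (h ▸ hqJ')
          have hqlt : key q < key c := lt_of_le_of_ne hqle (fun h => hqne (key_inj h))
          have hshiftlt : key (q.1, q.2 + d) < key p := by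
            have := key_shift q c d hqlt
            rwa [hshiftc] at this
          exact hNmono _ p hshiftlt.le (IH _ hshiftlt)
  -- every element of F is in the span of the monomial vectors
  have hBspan : ∀ b : B, b ∈ Submodule.span A (Set.range mono) := by
    intro b
    have hcl : (Submonoid.closure (Set.range x) : Set B) ⊆ Set.range mono := by
      have : Submonoid.closure (Set.range x) ≤
          { carrier := Set.range mono
            mul_mem' := by
              rintro _ _ ⟨i, rfl⟩ ⟨k, rfl⟩
              exact ⟨i + k, by rw [mono_add, mul_comm]⟩
            one_mem' := ⟨0, by simp [hmono]⟩ } := by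
        rw [Submonoid.closure_le]
        rintro _ ⟨j, rfl⟩
        refine ⟨Pi.single j 1, ?_⟩
        simp only [hmono]
        rw [Finset.prod_eq_single j (fun j' _ h => by simp [Pi.single_apply, h])
          (fun h => absurd (Finset.mem_univ j) h)]
        simp
      exact this
    have : b ∈ Submodule.span A (Submonoid.closure (Set.range x) : Set B) := by
      have hb : b ∈ Subalgebra.toSubmodule (Algebra.adjoin A (Set.range x)) := by
        rw [hx]; trivial
      rwa [Algebra.adjoin_eq_span] at hb
    exact Submodule.span_le.mpr (Set.Subset.trans hcl Submodule.subset_span) this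
  have hFspan : ∀ f : Fin m → B, f ∈ Submodule.span A (Set.range μ) := by
    intro f
    have hf : f = ∑ ℓ, Pi.single ℓ (f ℓ) := (Finset.univ_sum_single f).symm
    rw [hf]
    apply Submodule.sum_mem
    intro ℓ _
    have hsingle : Pi.single ℓ (f ℓ) = f ℓ • e ℓ := by
      funext j
      by_cases h : ℓ = j
      · subst h; simp [he]
      · simp [he, Pi.single_apply, h, Pi.smul_apply]
    rw [hsingle]
    set t : B →ₗ[A] (Fin m → B) := (((LinearMap.lsmul B (Fin m → B)).flip (e ℓ)).restrictScalars A) with ht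
    have : f ℓ • e ℓ = t (f ℓ) := rfl
    rw [this]
    have := Submodule.apply_mem_span_image_of_mem_span t (hBspan (f ℓ))
    refine Submodule.span_mono ?_ this
    rintro _ ⟨_, ⟨i, rfl⟩, rfl⟩
    exact ⟨(ℓ, i), rfl⟩
  -- kernel equals K
  have hker : LinearMap.ker π = K := by
    apply le_antisymm _ hKker
    intro y hy
    have hyN : y ∈ (K.restrictScalars A) ⊔ Submodule.span A (μ '' J') := by
      have hle : Submodule.span A (Set.range μ) ≤
          (K.restrictScalars A) ⊔ Submodule.span A (μ '' J') := by
        rw [Submodule.span_le]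
        rintro _ ⟨p, rfl⟩
        refine SetLike.le_def.mp ?_ (main p)
        apply sup_le_sup_left
        apply Submodule.span_mono
        exact Set.image_mono (fun q hq => hq.1)
      exact hle (hFspan y)
    obtain ⟨k, hk, s, hs, rfl⟩ := Submodule.mem_sup.mp hyN
    obtain ⟨l, hl1, rfl⟩ := (Finsupp.mem_span_image_iff_linearCombination A).mp hs
    have hπk : π k = 0 := hKker hk
    have hπs : π (Finsupp.linearCombination A μ l) = 0 := by
      have := LinearMap.mem_ker.mp hy
      rw [map_add, hπk, zero_add] at this
      exact this
    have hcomb : Finsupp.linearCombination A w l = 0 := by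
      have happ : (π.restrictScalars A) (Finsupp.linearCombination A μ l) =
          Finsupp.linearCombination A (fun q => π (μ q)) l :=
        Finsupp.apply_linearCombination A (π.restrictScalars A) μ l
      have : Finsupp.linearCombination A (fun q => π (μ q)) l = 0 := by
        rw [← happ]; exact hπs
      rwa [show (fun q => π (μ q)) = w from funext hπμ] at this
    have hl0 : l = 0 := (linearIndepOn_iff (v := w) (s := J')).mp hind l hl1 hcomb
    rw [hl0, map_zero, add_zero]
    exact hk
  -- conclude
  have hkerfg : (LinearMap.ker π).FG := by
    rw [hker, hK]
    exact Submodule.fg_span (hCfin.image r)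
  exact Module.finitePresentation_of_surjective π hπsurj hkerfg
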